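/- Let V be a finite set, F : {0,1}^V → {0, 1, …, |V|} a generalized counting function, S ⊆ {0, 1, …, |V|} a 2-gap free set, and M = {α : F(α) ∈ S} nonempty. Fix α ∈ M, let U = {n : min S ≤ n ≤ max S and n ≡ F(α) (mod 2)}, and let M_α = {β ∈ {0,1}^V : F(β) ∈ U}. Then: (1) M_α is an even Δ-matroid; (2) M_α contains every β ∈ M whose number of ones has the same parity as that of α; and (3) every γ ∈ M_α ∖ M satisfies γ ⊕ v ∈ M for all v ∈ V. In particular, the sets M_α witness that M is coverable. -/
import Mathlib


/-- Flip the values of a Boolean tuple on a finite set of coordinates. -/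
def flipS {V : Type*} [DecidableEq V] (α : V → Bool) (S : Finset V) : V → Bool :=
  fun v => if v ∈ S then !(α v) else α v

/-- Flip the value of a Boolean tuple at a single coordinate. -/
def flip1 {V : Type*} [DecidableEq V] (α : V → Bool) (u : V) : V → Bool :=
  flipS α {u}

/-- `M` is a Δ-matroid. -/
def IsDeltaMatroid {V : Type*} [DecidableEq V] (M : Set (V → Bool)) : Prop :=
  M.Nonempty ∧ ∀ α ∈ M, ∀ β ∈ M, ∀ v, α v ≠ β v →
    ∃ u, α u ≠ β u ∧ flipS α {u, v} ∈ M

/-- Number of ones in a Boolean tuple. -/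
def numOnes {V : Type*} [Fintype V] (α : V → Bool) : ℕ :=
  (Finset.univ.filter fun v => α v = true).card

/-- `M` is an even Δ-matroid. -/
def IsEvenDeltaMatroid {V : Type*} [Fintype V] [DecidableEq V] (M : Set (V → Bool)) : Prop :=
  IsDeltaMatroid M ∧ ∀ α ∈ M, ∀ β ∈ M, numOnes α % 2 = numOnes β % 2

/-- `α` and `β` are even-neighbors with respect to `M`. -/
def EvenNeighbors {V : Type*} [DecidableEq V] (M : Set (V → Bool)) (α β : V → Bool) : Prop :=
  ∃ u v, u ≠ v ∧ β = flip1 (flip1 α u) v ∧ flip1 α u ∉ M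

/-- Reachability via chains of even-neighbors inside `M`. -/
def Reachable {V : Type*} [DecidableEq V] (M : Set (V → Bool)) :
    (V → Bool) → (V → Bool) → Prop :=
  Relation.ReflTransGen (fun x y => x ∈ M ∧ y ∈ M ∧ EvenNeighbors M x y)

/-- `M` is coverable. -/
def Coverable {V : Type*} [Fintype V] [DecidableEq V] (M : Set (V → Bool)) : Prop :=
  ∀ α ∈ M, ∃ Mα : Set (V → Bool),
    IsEvenDeltaMatroid Mα ∧
    (∀ β ∈ M, Reachable M α β → β ∈ Mα) ∧
    (∀ γ ∈ M, Reachable M α γ → ∀ u v,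
      flip1 (flip1 γ u) v ∈ Mα → flip1 (flip1 γ u) v ∉ M →
      flip1 γ u ∈ M ∧ flip1 γ v ∈ M)

/-- Direct product of two sets of tuples on disjoint ground sets. -/
def prodSet {U V : Type*} (M : Set (U → Bool)) (N : Set (V → Bool)) :
    Set (U ⊕ V → Bool) :=
  {h | (fun u => h (Sum.inl u)) ∈ M ∧ (fun v => h (Sum.inr v)) ∈ N}

/-- `M` is an even-zebra Δ-matroid. -/
def IsEvenZebra {V : Type*} [Fintype V] [DecidableEq V] (M : Set (V → Bool)) : Prop :=
  ∀ α ∈ M, ∃ Mα : Set (V → Bool),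
    IsEvenDeltaMatroid Mα ∧
    (∀ β ∈ M, numOnes β % 2 = numOnes α % 2 → β ∈ Mα) ∧
    (∀ β ∈ M, ∀ u v, flip1 (flip1 β u) v ∈ Mα → flip1 (flip1 β u) v ∉ M →
      flip1 β u ∈ M ∧ flip1 β v ∈ M)

/-- Identification of two variables of `M`. -/
def identify {U : Type*} [DecidableEq U] (M : Set (U → Bool)) (w₁ w₂ : U) :
    Set ({x : U // x ≠ w₁ ∧ x ≠ w₂} → Bool) :=
  {g | ∃ β ∈ M, β w₁ = β w₂ ∧ ∀ x : {x : U // x ≠ w₁ ∧ x ≠ w₂}, g x = β x.val}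


/-- `F` is a generalized counting function on `{0,1}^V`: it takes values in
`{0, …, |V|}`, changes by exactly `±1` under flipping a single coordinate, and whenever
`F α > F β` there are coordinates `u, v ∈ α △ β` with `F (α ⊕ u) = F α − 1` and
`F (β ⊕ v) = F β + 1`. -/
def IsGCFunction {V : Type*} [Fintype V] [DecidableEq V] (F : (V → Bool) → ℕ) : Prop :=
  (∀ α, F α ≤ Fintype.card V) ∧
  (∀ α (v : V), F (flip1 α v) = F α + 1 ∨ F (flip1 α v) + 1 = F α) ∧
  (∀ α β, F β < F α → ∃ u v, α u ≠ β u ∧ α v ≠ β v ∧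
    F (flip1 α u) + 1 = F α ∧ F (flip1 β v) = F β + 1)

/-- `S` is 2-gap free: any `x ∉ S` with `min S < x < max S` has both `x + 1 ∈ S` and
`x − 1 ∈ S`. -/
def TwoGapFree (S : Finset ℕ) : Prop :=
  ∀ x, x ∉ S → (∃ a ∈ S, a < x) → (∃ b ∈ S, x < b) → (x + 1 ∈ S ∧ x - 1 ∈ S)


section Aux

variable {V : Type} [DecidableEq V]

lemma flip1_apply (x : V → Bool) (a w : V) : flip1 x a w = if w = a then !x w else x w := by
  simp [flip1, flipS]

lemma flip1_flip1 (x : V → Bool) (a : V) : flip1 (flip1 x a) a = x := by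
  funext w; simp [flip1_apply]; split_ifs <;> simp

lemma flip1_comm (x : V → Bool) (a b : V) : flip1 (flip1 x a) b = flip1 (flip1 x b) a := by
  funext w
  by_cases h1 : w = a <;> by_cases h2 : w = b <;> simp_all [flip1_apply]

lemma flipS_pair (x : V → Bool) {u v : V} (h : u ≠ v) :
    flipS x {u, v} = flip1 (flip1 x v) u := by
  funext w
  by_cases h1 : w = u <;> by_cases h2 : w = v <;>
    simp_all [flip1_apply, flipS]

lemma numOnes_flip1 [Fintype V] (x : V → Bool) (u : V) :
    numOnes (flip1 x u) = numOnes x + 1 ∨ numOnes (flip1 x u) + 1 = numOnes x := by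
  unfold numOnes
  by_cases h : x u = true
  · right
    have hset : (Finset.univ.filter fun v => flip1 x u v = true)
        = (Finset.univ.filter fun v => x v = true).erase u := by
      ext w
      by_cases hw : w = u <;> simp_all [flip1_apply]
    have hu : u ∈ Finset.univ.filter fun v => x v = true := by simp [h]
    have hpos : 0 < (Finset.univ.filter fun v => x v = true).card :=
      Finset.card_pos.mpr ⟨u, hu⟩
    rw [hset, Finset.card_erase_of_mem hu]
    omega
  · left
    have hset : (Finset.univ.filter fun v => flip1 x u v = true)
        = insert u (Finset.univ.filter fun v => x v = true) := by
      ext w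
      by_cases hw : w = u <;> simp_all [flip1_apply]
    have hu : u ∉ Finset.univ.filter fun v => x v = true := by simp [h]
    rw [hset, Finset.card_insert_of_notMem hu]

lemma sum_parity [Fintype V] (F : (V → Bool) → ℕ)
    (hF : ∀ x (u : V), F (flip1 x u) = F x + 1 ∨ F (flip1 x u) + 1 = F x) :
    ∀ x y : V → Bool, (F x + numOnes x) % 2 = (F y + numOnes y) % 2 := by
  suffices H : ∀ (n : ℕ) (x y : V → Bool),
      (Finset.univ.filter fun w => x w ≠ y w).card = n →
      (F x + numOnes x) % 2 = (F y + numOnes y) % 2 by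
    intro x y; exact H _ x y rfl
  intro n
  induction n with
  | zero =>
    intro x y hcard
    have : x = y := by
      funext w
      by_contra hw
      have : w ∈ Finset.univ.filter fun w => x w ≠ y w := by simp [hw]
      rw [Finset.card_eq_zero] at hcard
      simp [hcard] at this
    rw [this]
  | succ n ih =>
    intro x y hcard
    have hne : (Finset.univ.filter fun w => x w ≠ y w).Nonempty := by
      rw [← Finset.card_pos, hcard]; omega
    obtain ⟨u, hu⟩ := hne
    have hxu : x u ≠ y u := by simpa using hu
    have hset : (Finset.univ.filter fun w => flip1 x u w ≠ y w)
        = (Finset.univ.filter fun w => x w ≠ y w).erase u := by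
      ext w
      by_cases hw : w = u
      · subst hw
        simp [flip1_apply]
        revert hxu; cases x w <;> cases y w <;> simp
      · simp [flip1_apply, hw]
    have hcard' : (Finset.univ.filter fun w => flip1 x u w ≠ y w).card = n := by
      rw [hset, Finset.card_erase_of_mem hu, hcard]
      omega
    have h1 := ih (flip1 x u) y hcard'
    have h2 := hF x u
    have h3 := numOnes_flip1 x u
    omega

lemma master {V : Type} [Fintype V] [DecidableEq V]
    (F : (V → Bool) → ℕ) (S : Finset ℕ) (hF : IsGCFunction F)
    (hgap : TwoGapFree S) (hS : S.Nonempty)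
    (α : V → Bool) (hα : F α ∈ S) :
    IsEvenDeltaMatroid {β | S.min' hS ≤ F β ∧ F β ≤ S.max' hS ∧ F β % 2 = F α % 2} ∧
    (∀ β : V → Bool, F β ∈ S → numOnes β % 2 = numOnes α % 2 →
      β ∈ {β | S.min' hS ≤ F β ∧ F β ≤ S.max' hS ∧ F β % 2 = F α % 2}) ∧
    (∀ γ ∈ {β | S.min' hS ≤ F β ∧ F β ≤ S.max' hS ∧ F β % 2 = F α % 2},
      F γ ∉ S → ∀ v, F (flip1 γ v) ∈ S) := by
  obtain ⟨hF1, hF2, hF3⟩ := hF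
  refine ⟨⟨⟨⟨α, S.min'_le _ hα, S.le_max' _ hα, rfl⟩, ?_⟩, ?_⟩, ?_, ?_⟩
  · -- exchange axiom
    intro β hβ γ hγ v hv
    obtain ⟨hβ1, hβ2, hβ3⟩ := hβ
    obtain ⟨hγ1, hγ2, hγ3⟩ := hγ
    set β' := flip1 β v with hβ'def
    have hβ'v : β' v = γ v := by
      have : β' v = !β v := by simp [hβ'def, flip1_apply]
      rw [this]; revert hv; cases β v <;> cases γ v <;> simp
    have hflip : F β' = F β + 1 ∨ F β' + 1 = F β := by
      rw [hβ'def]; exact hF2 β v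
    have key : ∃ u, β' u ≠ γ u ∧ S.min' hS ≤ F (flip1 β' u) ∧
        F (flip1 β' u) ≤ S.max' hS ∧ F (flip1 β' u) % 2 = F α % 2 := by
      have hne : F β' ≠ F γ := by rcases hflip with h | h <;> omega
      rcases lt_or_gt_of_ne hne with hlt | hgt
      · obtain ⟨u, v', _, h2, _, hFd⟩ := hF3 γ β' hlt
        have h2' : β' v' ≠ γ v' := fun h => h2 h.symm
        rcases hflip with h | h
        · exact ⟨v', h2', by omega, by omega, by omega⟩
        · exact ⟨v', h2', by omega, by omega, by omega⟩
      · obtain ⟨u, v', h1, _, hFd, _⟩ := hF3 β' γ hgt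
        rcases hflip with h | h
        · exact ⟨u, h1, by omega, by omega, by omega⟩
        · exact ⟨u, h1, by omega, by omega, by omega⟩
    obtain ⟨u, hu, hb1, hb2, hb3⟩ := key
    have huv : u ≠ v := fun h => hu (by rw [h]; exact hβ'v)
    refine ⟨u, ?_, ?_⟩
    · have : β u = β' u := by simp [hβ'def, flip1_apply, huv]
      rw [this]; exact hu
    · rw [flipS_pair β huv]
      exact ⟨hb1, hb2, hb3⟩
  · -- evenness
    intro β hβ γ hγ
    have h1 := sum_parity F hF2 β γ
    obtain ⟨_, _, hβ3⟩ := hβ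
    obtain ⟨_, _, hγ3⟩ := hγ
    omega
  · -- part 2
    intro β hFβ hpar
    have h1 := sum_parity F hF2 β α
    exact ⟨S.min'_le _ hFβ, S.le_max' _ hFβ, by omega⟩
  · -- part 3
    intro γ hγ hγS v
    obtain ⟨h1, h2, _⟩ := hγ
    have hmin : S.min' hS ∈ S := S.min'_mem hS
    have hmax : S.max' hS ∈ S := S.max'_mem hS
    have hlt1 : S.min' hS < F γ := lt_of_le_of_ne h1 (fun h => hγS (h ▸ hmin))
    have hlt2 : F γ < S.max' hS := lt_of_le_of_ne h2 (fun h => hγS (h.symm ▸ hmax))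
    obtain ⟨hp, hm⟩ := hgap (F γ) hγS ⟨_, hmin, hlt1⟩ ⟨_, hmax, hlt2⟩
    rcases hF2 γ v with h | h
    · rw [h]; exact hp
    · have : F (flip1 γ v) = F γ - 1 := by omega
      rw [this]; exact hm

end Aux

/-- For a compact-like Δ-matroid `M = {α : F α ∈ S}`, fixing `α ∈ M` and letting
`M_α = {β : F β ∈ U}` where `U = {n : min S ≤ n ≤ max S, n ≡ F α (mod 2)}`:
(1) `M_α` is an even Δ-matroid; (2) `M_α` contains every `β ∈ M` whose number of ones
has the same parity as that of `α`; (3) every `γ ∈ M_α ∖ M` satisfies `γ ⊕ v ∈ M` for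
all `v`.  In particular, `M` is coverable. -/
theorem compactLike_cover {V : Type} [Fintype V] [DecidableEq V]
    (F : (V → Bool) → ℕ) (S : Finset ℕ)
    (hF : IsGCFunction F) (hSsub : ∀ s ∈ S, s ≤ Fintype.card V) (hgap : TwoGapFree S)
    (hS : S.Nonempty)
    (M : Set (V → Bool)) (hM : M = {α | F α ∈ S}) (hne : M.Nonempty)
    (α : V → Bool) (hα : α ∈ M)
    (Mα : Set (V → Bool))
    (hMα : Mα = {β | S.min' hS ≤ F β ∧ F β ≤ S.max' hS ∧ F β % 2 = F α % 2}) :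
    IsEvenDeltaMatroid Mα ∧
    (∀ β ∈ M, numOnes β % 2 = numOnes α % 2 → β ∈ Mα) ∧
    (∀ γ ∈ Mα, γ ∉ M → ∀ v, flip1 γ v ∈ M) ∧
    Coverable M := by
  subst hM hMα
  have H := master F S hF hgap hS α hα
  refine ⟨H.1, fun β hβ hpar => H.2.1 β hβ hpar, fun γ hγ hγM v => H.2.2 γ hγ hγM v, ?_⟩
  intro α' hα'
  have H' := master F S hF hgap hS α' hα'
  refine ⟨_, H'.1, ?_, ?_⟩
  · -- reachable implies in Mα'
    intro β hβ hreach
    have hpar : F β % 2 = F α' % 2 := by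
      clear hβ
      induction hreach with
      | refl => rfl
      | @tail b c _ hstep ih =>
        obtain ⟨_, _, u, v, _, heq, _⟩ := hstep
        rw [heq]
        have h1 := hF.2.1 (flip1 b u) v
        have h2 := hF.2.1 b u
        omega
    exact ⟨S.min'_le _ hβ, S.le_max' _ hβ, hpar⟩
  · -- condition (3) of coverability
    intro γ hγ _ u v hmem hnot
    have h3 := H'.2.2 _ hmem hnot
    have e1 : flip1 (flip1 (flip1 γ u) v) v = flip1 γ u := flip1_flip1 _ _
    have e2 : flip1 (flip1 (flip1 γ u) v) u = flip1 γ v := by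
      rw [flip1_comm (flip1 γ u) v u, flip1_flip1]
    constructor
    · have := h3 v; rwa [e1] at this
    · have := h3 u; rwa [e2] at this
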